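/- Let f be a nonconstant continuous W^{1,2} function on the unit circle with Fourier coefficients c_n, normalized so that c₀ = 0 and max_{𝕋}|f| = 1. Let g(e^{iθ}) = f(e^{iθ}) - c₁e^{iθ}. If min_{𝕋}|f| ≤ 1/2, then max_{𝕋}|g| ≥ 1/4, and consequently Σ_{n≠1} n²|c_n|² ≥ 1/48. -/

import Mathlib

open Complex MeasureTheory Filter
open scoped Real Topology

theorem stmt7 (c : ℤ → ℂ) (f : ℝ → ℂ) (hcont : Continuous f)
    (hW12 : Summable fun n : ℤ => (n : ℝ) ^ 2 * ‖c n‖ ^ 2)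
    (hrep : ∀ θ : ℝ, f θ = ∑' n : ℤ, c n * Complex.exp (Complex.I * n * θ))
    (hnc : ∃ θ₁ θ₂ : ℝ, f θ₁ ≠ f θ₂)
    (hc0 : c 0 = 0)
    (hmax : (⨆ θ : ℝ, ‖f θ‖) = 1)
    (hmin : (⨅ θ : ℝ, ‖f θ‖) ≤ 1 / 2) :
    (1 / 4 ≤ ⨆ θ : ℝ, ‖f θ - c 1 * Complex.exp (Complex.I * θ)‖) ∧
    1 / 48 ≤ ∑' n : ℤ, (if n = 1 then 0 else (n : ℝ) ^ 2 * ‖c n‖ ^ 2) := by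
  -- basic exp norm facts
  have hexp : ∀ (n : ℤ) (θ : ℝ), ‖Complex.exp (Complex.I * n * θ)‖ = 1 := by
    intro n θ
    rw [Complex.norm_exp]
    simp [Complex.mul_re]
  have hexp1 : ∀ θ : ℝ, ‖Complex.exp (Complex.I * θ)‖ = 1 := by
    intro θ
    rw [Complex.norm_exp]
    simp [Complex.mul_re]
  -- summability of 1/n^2 over ℤ
  have hw' : Summable fun n : ℤ => 1 / (n : ℝ) ^ 2 :=
    Real.summable_one_div_int_pow.mpr one_lt_two
  -- summability of ‖c n‖
  have hsc : Summable fun n : ℤ => ‖c n‖ := by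
    apply Summable.of_nonneg_of_le (fun n => norm_nonneg _) ?_
      ((hw'.add hW12).mul_left (1 / 2))
    intro n
    rcases eq_or_ne n 0 with h | h
    · have h0 : ‖c n‖ = 0 := by simp [h, hc0]
      rw [h0]
      positivity
    · have hn : (1 : ℝ) ≤ |(n : ℝ)| := by
        rcases le_or_gt 1 n with h1 | h1
        · calc (1:ℝ) ≤ (n : ℝ) := by exact_mod_cast h1
            _ ≤ |(n:ℝ)| := le_abs_self _
        · have : n ≤ -1 := by omega
          calc (1:ℝ) ≤ -(n : ℝ) := by exact_mod_cast (by omega : 1 ≤ -n)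
            _ ≤ |(n:ℝ)| := neg_le_abs _
      have hn0 : (0:ℝ) < |(n : ℝ)| := by linarith
      have hx2 : (0:ℝ) < (n:ℝ) ^ 2 := by positivity
      have hinv : 1 / (n:ℝ) ^ 2 * (n:ℝ) ^ 2 = 1 := by field_simp
      nlinarith [sq_nonneg (1 - (n:ℝ) ^ 2 * ‖c n‖), norm_nonneg (c n), hx2,
        mul_pos hx2 hx2, sq_nonneg ((n:ℝ) * ‖c n‖)]
  -- the hole sequences
  set a : ℤ → ℝ := fun n => if n = 1 then 0 else ‖c n‖ with ha_def
  set u : ℤ → ℝ := fun n => if n = 1 then 0 else 1 / |(n : ℝ)| with hu_def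
  set v : ℤ → ℝ := fun n => if n = 1 then 0 else |(n : ℝ)| * ‖c n‖ with hv_def
  have ha_sum : Summable a := by
    apply hsc.of_nonneg_of_le (fun n => by by_cases h : n = 1 <;> simp [ha_def, h])
    intro n; by_cases h : n = 1 <;> simp [ha_def, h]
  have hauv : ∀ n, a n = u n * v n := by
    intro n
    rcases eq_or_ne n 1 with h | h
    · simp [ha_def, hu_def, hv_def, h]
    rcases eq_or_ne n 0 with h0 | h0
    · simp [ha_def, hu_def, hv_def, h, h0, hc0]
    · have hn0 : |(n : ℝ)| ≠ 0 := by
        simp only [ne_eq, abs_eq_zero, Int.cast_eq_zero]; exact h0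
      simp only [ha_def, hu_def, hv_def, if_neg h]
      field_simp
  have hu2 : ∀ n, u n ^ 2 = (if n = 1 then (0:ℝ) else 1 / (n:ℝ) ^ 2) := by
    intro n
    rcases eq_or_ne n 1 with h | h <;>
      simp [hu_def, h, div_pow, _root_.sq_abs]
  have hv2 : ∀ n, v n ^ 2 = (if n = 1 then (0:ℝ) else (n:ℝ) ^ 2 * ‖c n‖ ^ 2) := by
    intro n
    rcases eq_or_ne n 1 with h | h <;>
      simp [hv_def, h, mul_pow, _root_.sq_abs]
  -- summabilities of squares
  have hu2_sum : Summable fun n : ℤ => (if n = 1 then (0:ℝ) else 1 / (n:ℝ) ^ 2) := by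
    apply hw'.of_nonneg_of_le (fun n => by by_cases h : n = 1 <;> simp [h] <;> positivity)
    intro n; by_cases h : n = 1 <;> simp [h] <;> positivity
  have hv2_sum : Summable fun n : ℤ => (if n = 1 then (0:ℝ) else (n:ℝ) ^ 2 * ‖c n‖ ^ 2) := by
    apply hW12.of_nonneg_of_le (fun n => by by_cases h : n = 1 <;> simp [h] <;> positivity)
    intro n; by_cases h : n = 1 <;> simp [h] <;> positivity
  set A : ℝ := ∑' n : ℤ, (if n = 1 then (0:ℝ) else 1 / (n:ℝ) ^ 2) with hA_def
  set B : ℝ := ∑' n : ℤ, (if n = 1 then (0:ℝ) else (n:ℝ) ^ 2 * ‖c n‖ ^ 2) with hB_def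
  have hB0 : 0 ≤ B :=
    tsum_nonneg fun n => by by_cases h : n = 1 <;> simp [h] <;> positivity
  -- value of A via Basel
  have hbasel : HasSum (fun n : ℕ => (1 : ℝ) / (n : ℝ) ^ 2) (π ^ 2 / 6) := hasSum_zeta_two
  have hneg : HasSum (fun n : ℕ => 1 / ((-(n + 1) : ℤ) : ℝ) ^ 2) (π ^ 2 / 6) := by
    have h1 : HasSum (fun n : ℕ => (1 : ℝ) / ((n : ℝ) + 1) ^ 2) (π ^ 2 / 6) := by
      have h := (hasSum_nat_add_iff' (f := fun n : ℕ => (1 : ℝ) / (n : ℝ) ^ 2)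
        (g := π ^ 2 / 6) 1).mpr hbasel
      norm_num at h
      convert h using 2 with n
      · rfl
      push_cast
      ring
    convert h1 using 2 with n
    push_cast
    ring
  have hwsum : HasSum (fun n : ℤ => 1 / (n : ℝ) ^ 2) (π ^ 2 / 6 + π ^ 2 / 6) := by
    apply HasSum.of_nat_of_neg_add_one
    · simp only [Int.cast_natCast]; exact hbasel
    · exact hneg
  have hAsum : HasSum (fun n : ℤ => (if n = 1 then (0:ℝ) else 1 / (n:ℝ) ^ 2))
      (0 - 1 / ((1:ℤ) : ℝ) ^ 2 + (π ^ 2 / 6 + π ^ 2 / 6)) := by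
    have := hwsum.update 1 0
    convert this using 1
    · rfl
    ext n
    rcases eq_or_ne n 1 with h | h <;> simp [Function.update, h]
  have hA_val : A = π ^ 2 / 3 - 1 := by
    rw [hA_def, hAsum.tsum_eq]; norm_num; ring
  have hA3 : A ≤ 3 := by
    rw [hA_val]
    nlinarith [Real.pi_lt_d2, Real.pi_pos]
  have hA0 : 0 ≤ A :=
    tsum_nonneg fun n => by by_cases h : n = 1 <;> simp [h] <;> positivity
  -- Cauchy-Schwarz : (tsum a)^2 ≤ A * B
  set S : ℝ := ∑' n, a n with hS_def
  have hCS : S ^ 2 ≤ A * B := by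
    have hfin : ∀ s : Finset ℤ, (∑ i ∈ s, a i) ^ 2 ≤ A * B := by
      intro s
      have h1 : (∑ i ∈ s, a i) ^ 2 ≤ (∑ i ∈ s, u i ^ 2) * (∑ i ∈ s, v i ^ 2) := by
        have := Finset.sum_mul_sq_le_sq_mul_sq s u v
        simpa [← hauv] using this
      have h2 : (∑ i ∈ s, u i ^ 2) ≤ A := by
        rw [hA_def]
        refine Summable.sum_le_tsum (L := SummationFilter.unconditional ℤ) s (fun n _ => sq_nonneg _) ?_
          |>.trans_eq ?_
        · exact hu2_sum.congr fun n => (hu2 n).symm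
        · exact tsum_congr fun n => (hu2 n)
      have h3 : (∑ i ∈ s, v i ^ 2) ≤ B := by
        rw [hB_def]
        refine Summable.sum_le_tsum (L := SummationFilter.unconditional ℤ) s (fun n _ => sq_nonneg _) ?_
          |>.trans_eq ?_
        · exact hv2_sum.congr fun n => (hv2 n).symm
        · exact tsum_congr fun n => (hv2 n)
      have hs2 : 0 ≤ ∑ i ∈ s, v i ^ 2 := Finset.sum_nonneg fun i _ => sq_nonneg _
      calc (∑ i ∈ s, a i) ^ 2 ≤ (∑ i ∈ s, u i ^ 2) * (∑ i ∈ s, v i ^ 2) := h1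
        _ ≤ A * B := mul_le_mul h2 h3 hs2 hA0
    have htend : Tendsto (fun s : Finset ℤ => ∑ i ∈ s, a i) atTop (𝓝 S) := ha_sum.hasSum
    exact le_of_tendsto (htend.pow 2) (Filter.Eventually.of_forall hfin)
  -- pointwise bound ‖g θ‖ ≤ S
  have hub : ∀ θ : ℝ, ‖f θ - c 1 * Complex.exp (Complex.I * θ)‖ ≤ S := by
    intro θ
    have hsummθ : Summable fun n : ℤ => c n * Complex.exp (Complex.I * n * θ) := by
      apply Summable.of_norm
      apply hsc.congr
      intro n
      rw [norm_mul, hexp n θ, mul_one]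
    have hsplit : f θ - c 1 * Complex.exp (Complex.I * θ) =
        ∑' n : ℤ, (if n = 1 then 0 else c n * Complex.exp (Complex.I * n * θ)) := by
      rw [hrep θ, hsummθ.tsum_eq_add_tsum_ite 1]
      push_cast
      rw [show Complex.I * 1 * (θ:ℂ) = Complex.I * θ by ring]
      ring
    rw [hsplit]
    have hsum2 : Summable fun n : ℤ =>
        ‖if n = 1 then (0:ℂ) else c n * Complex.exp (Complex.I * n * θ)‖ := by
      apply ha_sum.congr
      intro n
      rcases eq_or_ne n 1 with h | h <;> simp [ha_def, h, hexp n θ]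
    calc ‖∑' n : ℤ, (if n = 1 then 0 else c n * Complex.exp (Complex.I * n * θ))‖
        ≤ ∑' n : ℤ, ‖if n = 1 then (0:ℂ) else c n * Complex.exp (Complex.I * n * θ)‖ :=
          norm_tsum_le_tsum_norm hsum2
      _ = S := by
          rw [hS_def]
          refine tsum_congr fun n => ?_
          rcases eq_or_ne n 1 with h | h <;> simp [ha_def, h, hexp n θ]
  -- sup bound
  have hbdd : BddAbove (Set.range fun θ : ℝ => ‖f θ - c 1 * Complex.exp (Complex.I * θ)‖) := by
    refine ⟨S, ?_⟩
    rintro x ⟨θ, rfl⟩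
    exact hub θ
  have hsup14 : 1 / 4 ≤ ⨆ θ : ℝ, ‖f θ - c 1 * Complex.exp (Complex.I * θ)‖ := by
    refine le_of_forall_pos_le_add ?_
    intro ε hε
    obtain ⟨θM, hθM⟩ : ∃ θ : ℝ, 1 - ε < ‖f θ‖ := by
      apply exists_lt_of_lt_ciSup
      rw [hmax]; linarith
    obtain ⟨θm, hθm⟩ : ∃ θ : ℝ, ‖f θ‖ < 1 / 2 + ε := by
      apply exists_lt_of_ciInf_lt
      calc (⨅ θ : ℝ, ‖f θ‖) ≤ 1 / 2 := hmin
        _ < 1 / 2 + ε := by linarith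
    rcases le_total ‖c 1‖ (3 / 4) with h | h
    · have h1 : ‖f θM‖ - ‖c 1‖ ≤ ‖f θM - c 1 * Complex.exp (Complex.I * θM)‖ := by
        calc ‖f θM‖ - ‖c 1‖ = ‖f θM‖ - ‖c 1 * Complex.exp (Complex.I * θM)‖ := by
              rw [norm_mul, hexp1 θM, mul_one]
          _ ≤ _ := norm_sub_norm_le _ _
      have h2 := le_ciSup hbdd θM
      linarith
    · have h1 : ‖c 1‖ - ‖f θm‖ ≤ ‖f θm - c 1 * Complex.exp (Complex.I * θm)‖ := by
        calc ‖c 1‖ - ‖f θm‖ = ‖c 1 * Complex.exp (Complex.I * θm)‖ - ‖f θm‖ := by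
              rw [norm_mul, hexp1 θm, mul_one]
          _ ≤ ‖c 1 * Complex.exp (Complex.I * θm) - f θm‖ := norm_sub_norm_le _ _
          _ = ‖f θm - c 1 * Complex.exp (Complex.I * θm)‖ := norm_sub_rev _ _
      have h2 := le_ciSup hbdd θm
      linarith
  refine ⟨hsup14, ?_⟩
  have hsupS : (⨆ θ : ℝ, ‖f θ - c 1 * Complex.exp (Complex.I * θ)‖) ≤ S :=
    ciSup_le hub
  have h116 : (1 / 4 : ℝ) ^ 2 ≤ S ^ 2 := by
    have h0 : (0:ℝ) ≤ 1/4 := by norm_num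
    have := hsup14.trans hsupS
    nlinarith
  nlinarith
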